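/- Let $q > 1$, $\alpha \in (1/q, 1)$, and $f : [0,\infty) \to \mathbb{R}$ be continuous. Then there exists a constant $c_{\alpha,q} > 0$ depending only on $\alpha$ and $q$ such that for all $0 \leq s < t$, $\Big( \sup_{u \neq v \in [s,t]} \frac{|f(u)-f(v)|}{|u-v|^{\alpha - 1/q}} \Big)^q \leq c_{\alpha,q} \int_s^t \int_s^t \frac{|f(u)-f(v)|^q}{|u-v|^{1+q\alpha}}\, du\, dv$. -/

import Mathlib

open MeasureTheory Set Filter
open scoped ENNReal

/-- Core GRR average-difference bound. -/
lemma grr_avg_diff (q α : ℝ) (hq : 1 < q) (hα : α ∈ Set.Ioo (1 / q) 1)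
    (g : ℝ → ℝ) (hg : Continuous g) (s t : ℝ)
    {R : ℝ≥0∞}
    (hRdef : R = ∫⁻ x in Icc s t, ∫⁻ y in Icc s t,
        ENNReal.ofReal (|g x - g y| ^ q / |x - y| ^ (1 + q * α)))
    (hR : R ≠ ⊤)
    (p ℓ p' ℓ' L : ℝ) (hℓ : 0 < ℓ) (hℓ' : 0 < ℓ') (hL : 0 < L)
    (hK : Icc p (p + ℓ) ⊆ Icc s t) (hJ : Icc p' (p' + ℓ') ⊆ Icc s t)
    (hLb : ∀ x ∈ Icc p (p + ℓ), ∀ y ∈ Icc p' (p' + ℓ'), |x - y| ≤ L) :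
    |(∫ x in Icc p (p + ℓ), g x) / ℓ - (∫ y in Icc p' (p' + ℓ'), g y) / ℓ'|
      ≤ (L ^ (1 + q * α) * R.toReal) ^ (1 / q) * (ℓ * ℓ') ^ (-(1 / q)) := by
  have hq0 : (0:ℝ) < q := lt_trans one_pos hq
  have hqc : q.HolderConjugate (q / (q - 1)) := Real.HolderConjugate.conjExponent hq
  set q' : ℝ := q / (q - 1) with hq'def
  have hq'0 : 0 < q' := hqc.symm.pos
  have hexp : (0:ℝ) ≤ 1 + q * α := by
    have h1 : 1 / q < α := hα.1
    have : 0 < 1 / q := by positivity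
    nlinarith
  set K := Icc p (p + ℓ) with hKdef
  set J := Icc p' (p' + ℓ') with hJdef
  set e : ℝ := 1 + q * α with hedef
  set I : ℝ := R.toReal with hIdef
  have hI0 : 0 ≤ I := ENNReal.toReal_nonneg
  have hgK : IntegrableOn g K := hg.integrableOn_Icc
  have hgJ : IntegrableOn g J := hg.integrableOn_Icc
  have hvolK : (volume K).toReal = ℓ := by
    simp [hKdef, Real.volume_Icc, ENNReal.toReal_ofReal hℓ.le]
  have hvolJ : (volume J).toReal = ℓ' := by
    simp [hJdef, Real.volume_Icc, ENNReal.toReal_ofReal hℓ'.le]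
  have hvolKe : volume K = ENNReal.ofReal ℓ := by
    simp [hKdef, Real.volume_Icc]
  have hvolJe : volume J = ENNReal.ofReal ℓ' := by
    simp [hJdef, Real.volume_Icc]
  set cJ : ℝ := ∫ y in J, g y with hcJ
  have hinner : ∀ x : ℝ, (∫ y in J, (g x - g y)) = ℓ' * g x - cJ := by
    intro x
    rw [integral_sub (integrableOn_const (C := g x) (by rw [hvolJe]; exact ENNReal.ofReal_ne_top)) hgJ]
    simp [setIntegral_const, measureReal_def, hvolJ, smul_eq_mul, hcJ]
  set E : ℝ := ∫ x in K, (ℓ' * g x - cJ) with hEdef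
  have hEval : E = ℓ' * (∫ x in K, g x) - ℓ * cJ := by
    rw [hEdef, integral_sub (hgK.const_mul _) (integrableOn_const (by rw [hvolKe]; exact ENNReal.ofReal_ne_top))]
    rw [integral_const_mul]
    simp [setIntegral_const, measureReal_def, hvolK, smul_eq_mul]
  have hdiff : (∫ x in K, g x) / ℓ - cJ / ℓ' = E / (ℓ * ℓ') := by
    rw [hEval]; field_simp
  -- measurable family
  have hFqcont : Continuous (fun z : ℝ × ℝ => ENNReal.ofReal (|g z.1 - g z.2| ^ q)) := by
    apply ENNReal.continuous_ofReal.comp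
    exact (((hg.comp continuous_fst).sub (hg.comp continuous_snd)).abs).rpow_const
      (fun z => Or.inr hq0.le)
  have hFquncurry : Measurable (Function.uncurry fun x y : ℝ => ENNReal.ofReal (|g x - g y| ^ q)) :=
    hFqcont.measurable
  set Φ : ℝ → ℝ≥0∞ := fun x => ∫⁻ y in J, ENNReal.ofReal (|g x - g y| ^ q) with hΦdef
  have hΦmeas : Measurable Φ := Measurable.lintegral_prod_right hFquncurry
  -- step ii+iii : pointwise bound for the inner integral
  have hCJ : (ENNReal.ofReal ℓ') ^ (1 / q') ≠ ⊤ := by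
    exact ENNReal.rpow_ne_top_of_nonneg (by positivity) ENNReal.ofReal_ne_top
  have hpoint : ∀ x : ℝ, ENNReal.ofReal |ℓ' * g x - cJ|
      ≤ (Φ x) ^ (1 / q) * (ENNReal.ofReal ℓ') ^ (1 / q') := by
    intro x
    have habs : |ℓ' * g x - cJ| ≤ ∫ y in J, |g x - g y| := by
      rw [← hinner x]
      calc |∫ y in J, (g x - g y)| = ‖∫ y in J, (g x - g y)‖ := (Real.norm_eq_abs _).symm
        _ ≤ ∫ y in J, ‖g x - g y‖ := norm_integral_le_integral_norm _
        _ = ∫ y in J, |g x - g y| := by simp [Real.norm_eq_abs]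
    have hint : IntegrableOn (fun y => |g x - g y|) J :=
      (((continuous_const.sub hg).abs)).integrableOn_Icc
    have heq : ENNReal.ofReal (∫ y in J, |g x - g y|)
        = ∫⁻ y in J, ENNReal.ofReal |g x - g y| :=
      ofReal_integral_eq_lintegral_ofReal hint (ae_of_all _ fun y => abs_nonneg _)
    have hHy : (∫⁻ y in J, ENNReal.ofReal |g x - g y|)
        ≤ (Φ x) ^ (1 / q) * (ENNReal.ofReal ℓ') ^ (1 / q') := by
      have hmeas : AEMeasurable (fun y => ENNReal.ofReal |g x - g y|) (volume.restrict J) :=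
        (ENNReal.continuous_ofReal.comp ((continuous_const.sub hg).abs)).measurable.aemeasurable
      have := ENNReal.lintegral_mul_le_Lp_mul_Lq (volume.restrict J) hqc hmeas
        (aemeasurable_const (b := (1:ℝ≥0∞)))
      simp only [Pi.mul_apply, mul_one, ENNReal.one_rpow, lintegral_const,
        Measure.restrict_apply MeasurableSet.univ, Set.univ_inter, one_mul] at this
      calc (∫⁻ y in J, ENNReal.ofReal |g x - g y|) ≤
          (∫⁻ y in J, ENNReal.ofReal |g x - g y| ^ q) ^ (1 / q) * (volume J) ^ (1 / q') := this
        _ = (Φ x) ^ (1 / q) * (ENNReal.ofReal ℓ') ^ (1 / q') := by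
            rw [hvolJe, hΦdef]
            congr 1
            congr 1
            refine lintegral_congr fun y => ?_
            rw [ENNReal.ofReal_rpow_of_nonneg (abs_nonneg _) hq0.le]
    calc ENNReal.ofReal |ℓ' * g x - cJ| ≤ ENNReal.ofReal (∫ y in J, |g x - g y|) :=
          ENNReal.ofReal_le_ofReal habs
      _ = ∫⁻ y in J, ENNReal.ofReal |g x - g y| := heq
      _ ≤ _ := hHy
  -- step v : bound on ∫⁻ Φ
  -- measurability of quotient integrand
  have hmeasq0 : ∀ x : ℝ, Measurable fun y : ℝ =>
      ENNReal.ofReal (|g x - g y| ^ q / |x - y| ^ e) := by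
    intro x
    apply ENNReal.measurable_ofReal.comp
    apply Measurable.div
    · exact (((continuous_const.sub hg).abs).rpow_const (fun z => Or.inr hq0.le)).measurable
    · exact (((continuous_const.sub continuous_id).abs).rpow_const (fun z => Or.inr hexp)).measurable
  have hmeasq : ∀ x : ℝ, Measurable fun y : ℝ =>
      ENNReal.ofReal (L ^ e) * ENNReal.ofReal (|g x - g y| ^ q / |x - y| ^ e) :=
    fun x => (hmeasq0 x).const_mul _
  -- pointwise comparison
  have hpt : ∀ x ∈ K, ∀ y ∈ J, ENNReal.ofReal (|g x - g y| ^ q)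
      ≤ ENNReal.ofReal (L ^ e) * ENNReal.ofReal (|g x - g y| ^ q / |x - y| ^ e) := by
    intro x hx y hy
    rw [← ENNReal.ofReal_mul (by positivity)]
    apply ENNReal.ofReal_le_ofReal
    rcases eq_or_ne x y with h | h
    · subst h
      simp only [sub_self, abs_zero]
      rw [Real.zero_rpow hq0.ne']
      positivity
    · have hxy : 0 < |x - y| := abs_pos.2 (sub_ne_zero.2 h)
      have hle : |x - y| ^ e ≤ L ^ e := Real.rpow_le_rpow (abs_nonneg _) (hLb x hx y hy) hexp
      have hbpos : 0 < |x - y| ^ e := Real.rpow_pos_of_pos hxy e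
      rw [← mul_div_assoc, le_div_iff₀ hbpos]
      calc |g x - g y| ^ q * |x - y| ^ e ≤ |g x - g y| ^ q * L ^ e :=
            mul_le_mul_of_nonneg_left hle (by positivity)
        _ = L ^ e * |g x - g y| ^ q := mul_comm _ _
  -- measurability of x ↦ ∫⁻ y in Icc s t, ...
  have hΨuncurry : Measurable (Function.uncurry fun x y : ℝ =>
      ENNReal.ofReal (|g x - g y| ^ q / |x - y| ^ e)) := by
    apply ENNReal.measurable_ofReal.comp
    apply Measurable.div
    · exact ((((hg.comp continuous_fst).sub (hg.comp continuous_snd)).abs).rpow_const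
        (fun z => Or.inr hq0.le)).measurable
    · exact (((continuous_fst.sub continuous_snd).abs).rpow_const (fun z => Or.inr hexp)).measurable
  have hΨmeas : Measurable fun x : ℝ => ∫⁻ y in Icc s t,
      ENNReal.ofReal (|g x - g y| ^ q / |x - y| ^ e) :=
    Measurable.lintegral_prod_right hΨuncurry
  -- step v : bound on ∫⁻ Φ
  have hΦbound : (∫⁻ x in K, Φ x) ≤ ENNReal.ofReal (L ^ e) * R := by
    have step1 : ∀ x ∈ K, Φ x ≤ ENNReal.ofReal (L ^ e)
        * ∫⁻ y in Icc s t, ENNReal.ofReal (|g x - g y| ^ q / |x - y| ^ e) := by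
      intro x hx
      calc Φ x ≤ ∫⁻ y in J, ENNReal.ofReal (L ^ e)
            * ENNReal.ofReal (|g x - g y| ^ q / |x - y| ^ e) :=
            setLIntegral_mono (hmeasq x) (fun y hy => hpt x hx y hy)
        _ = ENNReal.ofReal (L ^ e)
            * ∫⁻ y in J, ENNReal.ofReal (|g x - g y| ^ q / |x - y| ^ e) :=
            lintegral_const_mul _ (hmeasq0 x)
        _ ≤ _ := mul_le_mul_right (lintegral_mono_set hJ) _
    calc (∫⁻ x in K, Φ x)
        ≤ ∫⁻ x in K, ENNReal.ofReal (L ^ e)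
          * ∫⁻ y in Icc s t, ENNReal.ofReal (|g x - g y| ^ q / |x - y| ^ e) :=
          setLIntegral_mono (hΨmeas.const_mul _) step1
      _ = ENNReal.ofReal (L ^ e) * ∫⁻ x in K, ∫⁻ y in Icc s t,
          ENNReal.ofReal (|g x - g y| ^ q / |x - y| ^ e) :=
          lintegral_const_mul _ hΨmeas
      _ ≤ ENNReal.ofReal (L ^ e) * R := by
          rw [hRdef]
          exact mul_le_mul_right (lintegral_mono_set hK) _
  -- combine everything in ℝ≥0∞
  have hEbound : ENNReal.ofReal |E| ≤ (ENNReal.ofReal ℓ') ^ (1/q')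
      * ((ENNReal.ofReal (L ^ e) * R) ^ (1/q) * (ENNReal.ofReal ℓ) ^ (1/q')) := by
    have habsE : |E| ≤ ∫ x in K, |ℓ' * g x - cJ| := by
      rw [hEdef]
      calc |∫ x in K, (ℓ' * g x - cJ)| = ‖∫ x in K, (ℓ' * g x - cJ)‖ := (Real.norm_eq_abs _).symm
        _ ≤ ∫ x in K, ‖ℓ' * g x - cJ‖ := norm_integral_le_integral_norm _
        _ = ∫ x in K, |ℓ' * g x - cJ| := by simp [Real.norm_eq_abs]
    have h1 : ENNReal.ofReal |E| ≤ ∫⁻ x in K, ENNReal.ofReal |ℓ' * g x - cJ| := by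
      rw [← ofReal_integral_eq_lintegral_ofReal (f := fun x => |ℓ' * g x - cJ|)
        (((continuous_const.mul hg).sub continuous_const).abs.integrableOn_Icc)
        (ae_of_all _ fun x => abs_nonneg _)]
      exact ENNReal.ofReal_le_ofReal habsE
    have h2 : (∫⁻ x in K, ENNReal.ofReal |ℓ' * g x - cJ|)
        ≤ ∫⁻ x in K, (Φ x) ^ (1/q) * (ENNReal.ofReal ℓ') ^ (1/q') :=
      lintegral_mono fun x => hpoint x
    have h3 : (∫⁻ x in K, (Φ x) ^ (1/q) * (ENNReal.ofReal ℓ') ^ (1/q'))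
        = (ENNReal.ofReal ℓ') ^ (1/q') * ∫⁻ x in K, (Φ x) ^ (1/q) := by
      simp_rw [mul_comm ((Φ _) ^ (1/q)) _]
      exact lintegral_const_mul _ (hΦmeas.pow_const _)
    have h4 : (∫⁻ x in K, (Φ x) ^ (1/q))
        ≤ (∫⁻ x in K, Φ x) ^ (1/q) * (ENNReal.ofReal ℓ) ^ (1/q') := by
      have hHx := ENNReal.lintegral_mul_le_Lp_mul_Lq (volume.restrict K) hqc
        ((hΦmeas.pow_const (1/q)).aemeasurable) (aemeasurable_const (b := (1:ℝ≥0∞)))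
      simp only [Pi.mul_apply, mul_one, ENNReal.one_rpow, lintegral_const,
        Measure.restrict_apply MeasurableSet.univ, Set.univ_inter, one_mul] at hHx
      calc (∫⁻ x in K, (Φ x) ^ (1/q))
          ≤ (∫⁻ x in K, ((Φ x) ^ (1/q)) ^ q) ^ (1/q) * (volume K) ^ (1/q') := hHx
        _ = (∫⁻ x in K, Φ x) ^ (1/q) * (ENNReal.ofReal ℓ) ^ (1/q') := by
            rw [hvolKe]
            congr 2
            refine lintegral_congr fun x => ?_
            rw [← ENNReal.rpow_mul, one_div, inv_mul_cancel₀ hq0.ne', ENNReal.rpow_one]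
    calc ENNReal.ofReal |E| ≤ ∫⁻ x in K, ENNReal.ofReal |ℓ' * g x - cJ| := h1
      _ ≤ ∫⁻ x in K, (Φ x) ^ (1/q) * (ENNReal.ofReal ℓ') ^ (1/q') := h2
      _ = (ENNReal.ofReal ℓ') ^ (1/q') * ∫⁻ x in K, (Φ x) ^ (1/q) := h3
      _ ≤ (ENNReal.ofReal ℓ') ^ (1/q')
          * ((∫⁻ x in K, Φ x) ^ (1/q) * (ENNReal.ofReal ℓ) ^ (1/q')) := mul_le_mul_right h4 _
      _ ≤ _ := by
          exact mul_le_mul_right (mul_le_mul_left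
            (ENNReal.rpow_le_rpow hΦbound (by positivity)) _) _
  -- convert to a real inequality
  have hQ : |E| ≤ (L ^ e * I) ^ (1/q) * (ℓ * ℓ') ^ (1/q') := by
    have hRI : R = ENNReal.ofReal I := (ENNReal.ofReal_toReal hR).symm
    rw [hRI, ← ENNReal.ofReal_mul (by positivity),
      ENNReal.ofReal_rpow_of_nonneg hℓ.le (by positivity),
      ENNReal.ofReal_rpow_of_nonneg hℓ'.le (by positivity)] at hEbound
    rw [ENNReal.ofReal_rpow_of_nonneg (by positivity : (0:ℝ) ≤ L ^ e * I) (by positivity),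
      ← ENNReal.ofReal_mul (by positivity), ← ENNReal.ofReal_mul (by positivity)] at hEbound
    have := (ENNReal.ofReal_le_ofReal_iff (by positivity)).mp hEbound
    calc |E| ≤ ℓ' ^ (1/q') * ((L ^ e * I) ^ (1/q) * ℓ ^ (1/q')) := this
      _ = (L ^ e * I) ^ (1/q) * (ℓ * ℓ') ^ (1/q') := by
          rw [Real.mul_rpow hℓ.le hℓ'.le]; ring
  -- final division
  have hP : (0:ℝ) < ℓ * ℓ' := by positivity
  have hPid : (ℓ * ℓ') ^ (1/q') / (ℓ * ℓ') = (ℓ * ℓ') ^ (-(1/q)) := by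
    have h1 : -(1/q) = 1/q' - 1 := by
      have h2 := hqc.inv_add_inv_eq_one
      rw [one_div, one_div]; linarith
    rw [h1, Real.rpow_sub hP, Real.rpow_one]
  calc |(∫ x in K, g x) / ℓ - cJ / ℓ'| = |E| / (ℓ * ℓ') := by
        rw [hdiff, abs_div, abs_of_pos hP]
    _ ≤ ((L ^ e * I) ^ (1/q) * (ℓ * ℓ') ^ (1/q')) / (ℓ * ℓ') :=
        (div_le_div_iff_of_pos_right hP).mpr hQ
    _ = (L ^ e * I) ^ (1/q) * (ℓ * ℓ') ^ (-(1/q)) := by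
        rw [mul_div_assoc, hPid]

lemma grr_tendsto_avg (g : ℝ → ℝ) (hg : Continuous g) (w d : ℝ) (hd : 0 < d) (c : ℕ → ℝ)
    (hw : ∀ n, w ∈ Icc (c n) (c n + d / 2 ^ n)) :
    Tendsto (fun n => (∫ x in Icc (c n) (c n + d / 2 ^ n), g x) / (d / 2 ^ n))
      atTop (nhds (g w)) := by
  rw [Metric.tendsto_atTop]
  intro ε hε
  obtain ⟨δ, hδ0, hδ⟩ := Metric.continuous_iff.mp hg w (ε / 2) (half_pos hε)
  obtain ⟨N, hN⟩ := pow_unbounded_of_one_lt (d / δ) (one_lt_two (α := ℝ))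
  refine ⟨N, fun n hn => ?_⟩
  set ℓ : ℝ := d / 2 ^ n with hℓdef
  have hℓ0 : 0 < ℓ := by positivity
  have hℓδ : ℓ < δ := by
    have h2 : (2:ℝ) ^ N ≤ 2 ^ n := pow_le_pow_right₀ one_le_two hn
    have hdδ : d / δ < 2 ^ n := lt_of_lt_of_le hN h2
    rw [hℓdef, div_lt_iff₀ (by positivity)]
    calc d = (d / δ) * δ := by field_simp
      _ < 2 ^ n * δ := by exact mul_lt_mul_of_pos_right hdδ hδ0
      _ = δ * 2 ^ n := mul_comm _ _
  have hvol : (volume (Icc (c n) (c n + ℓ))).toReal = ℓ := by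
    simp [Real.volume_Icc, ENNReal.toReal_ofReal hℓ0.le]
  have hint : IntegrableOn g (Icc (c n) (c n + ℓ)) := hg.integrableOn_Icc
  have hsub : (∫ x in Icc (c n) (c n + ℓ), (g x - g w))
      = (∫ x in Icc (c n) (c n + ℓ), g x) - ℓ * g w := by
    rw [integral_sub hint (integrableOn_const (by
      rw [Real.volume_Icc]; exact ENNReal.ofReal_ne_top))]
    simp [setIntegral_const, hvol, smul_eq_mul, hℓ0.le]
  have hbound : ‖∫ x in Icc (c n) (c n + ℓ), (g x - g w)‖ ≤ (ε / 2) * ℓ := by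
    have := norm_setIntegral_le_of_norm_le_const (μ := volume)
      (s := Icc (c n) (c n + ℓ)) (C := ε / 2)
      (by rw [Real.volume_Icc]; exact ENNReal.ofReal_lt_top)
      (fun x hx => by
        have hxw : dist x w < δ := by
          rw [Real.dist_eq]
          have h1 := (hw n).1
          have h2 := (hw n).2
          have h3 := hx.1
          have h4 := hx.2
          have : |x - w| ≤ ℓ := abs_le.mpr ⟨by linarith, by linarith⟩
          linarith
        have := hδ x hxw
        rw [Real.norm_eq_abs]
        exact le_of_lt (by rwa [Real.dist_eq] at this))
    rwa [measureReal_def, hvol] at this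
  rw [Real.dist_eq]
  have key : (∫ x in Icc (c n) (c n + ℓ), g x) / ℓ - g w
      = (∫ x in Icc (c n) (c n + ℓ), (g x - g w)) / ℓ := by
    rw [hsub]; field_simp
  calc |(∫ x in Icc (c n) (c n + ℓ), g x) / ℓ - g w|
      = |∫ x in Icc (c n) (c n + ℓ), (g x - g w)| / ℓ := by
        rw [key, abs_div, abs_of_pos hℓ0]
    _ ≤ ((ε / 2) * ℓ) / ℓ := by
        exact (div_le_div_iff_of_pos_right hℓ0).mpr (by rwa [Real.norm_eq_abs] at hbound)
    _ = ε / 2 := by field_simp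
    _ < ε := by linarith

lemma grr_key (q α : ℝ) (hq : 1 < q) (hα : α ∈ Set.Ioo (1 / q) 1)
    (g : ℝ → ℝ) (hg : Continuous g) (s t u v : ℝ)
    (hu : u ∈ Icc s t) (hv : v ∈ Icc s t) (huv : u < v) :
    ENNReal.ofReal ((|g u - g v| / (v - u) ^ (α - 1 / q)) ^ q)
      ≤ ENNReal.ofReal ((2 * 2 ^ (1 / q) / (1 - ((2:ℝ) ^ (α - 1 / q))⁻¹)) ^ q) *
        ∫⁻ x in Icc s t, ∫⁻ y in Icc s t,
          ENNReal.ofReal (|g x - g y| ^ q / |x - y| ^ (1 + q * α)) := by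
  have hq0 : (0:ℝ) < q := one_pos.trans hq
  set β : ℝ := α - 1 / q with hβ
  have hβ0 : 0 < β := sub_pos.2 hα.1
  set ρ : ℝ := ((2:ℝ) ^ β)⁻¹ with hρ
  have h2β : 1 < (2:ℝ) ^ β :=
    (Real.one_lt_rpow_iff_of_pos two_pos).mpr (Or.inl ⟨one_lt_two, hβ0⟩)
  have hρ0 : 0 < ρ := by rw [hρ]; positivity
  have hρ1 : ρ < 1 := by rw [hρ]; exact inv_lt_one_of_one_lt₀ h2β
  set R : ℝ≥0∞ := ∫⁻ x in Icc s t, ∫⁻ y in Icc s t,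
      ENNReal.ofReal (|g x - g y| ^ q / |x - y| ^ (1 + q * α)) with hRdef
  have hc0 : (0:ℝ) < (2 * 2 ^ (1 / q) / (1 - ρ)) ^ q := by
    have h1 : (0:ℝ) < 1 - ρ := by linarith
    have h2 : (0:ℝ) < 2 ^ (1/q) := Real.rpow_pos_of_pos two_pos _
    positivity
  by_cases hR : R = ⊤
  · rw [hR, ENNReal.mul_top (ENNReal.ofReal_pos.mpr hc0).ne']
    exact le_top
  -- main case
  set I : ℝ := R.toReal with hIdef
  have hI0 : 0 ≤ I := ENNReal.toReal_nonneg
  set d : ℝ := v - u with hd'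
  have hd : 0 < d := sub_pos.2 huv
  set a : ℕ → ℝ := fun n => (∫ x in Icc u (u + d / 2 ^ n), g x) / (d / 2 ^ n) with ha
  set b : ℕ → ℝ := fun n =>
    (∫ x in Icc (v - d / 2 ^ n) ((v - d / 2 ^ n) + d / 2 ^ n), g x) / (d / 2 ^ n) with hb
  set M : ℝ := 2 ^ (1/q) * I ^ (1/q) * d ^ β with hMdef
  have hM0 : 0 ≤ M := by
    have h2 : (0:ℝ) < 2 ^ (1/q) := Real.rpow_pos_of_pos two_pos _
    have h3 : (0:ℝ) ≤ I ^ (1/q) := Real.rpow_nonneg hI0 _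
    have h4 : (0:ℝ) < d ^ β := Real.rpow_pos_of_pos hd _
    positivity
  have hℓpos : ∀ n : ℕ, (0:ℝ) < d / 2 ^ n := fun n => by positivity
  have hℓmono : ∀ n : ℕ, d / 2 ^ (n+1) ≤ d / 2 ^ n := fun n =>
    div_le_div_of_nonneg_left hd.le (by positivity) (pow_le_pow_right₀ one_le_two (Nat.le_succ n))
  have hℓled : ∀ n : ℕ, d / 2 ^ n ≤ d := fun n => by
    calc d / 2 ^ n ≤ d / 2 ^ 0 := by
          exact div_le_div_of_nonneg_left hd.le (by positivity) (pow_le_pow_right₀ one_le_two (Nat.zero_le n))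
      _ = d := by norm_num
  have hsubA : ∀ n : ℕ, Icc u (u + d / 2 ^ n) ⊆ Icc s t := by
    intro n x hx
    have h1 := hℓled n
    exact ⟨by linarith [hu.1, hx.1], by linarith [hv.2, hx.2, hd'.ge]⟩
  have hsubB : ∀ n : ℕ, Icc (v - d / 2 ^ n) ((v - d / 2 ^ n) + d / 2 ^ n) ⊆ Icc s t := by
    intro n x hx
    have h1 := hℓled n
    have h2 := hx.1
    have h3 := hx.2
    constructor
    · have : u ≤ v - d / 2 ^ n := by
        have : v - d = u := by rw [hd']; ring
        linarith
      linarith [hu.1]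
    · linarith [hv.2]
  -- the rpow arithmetic
  have hstep : ∀ n : ℕ, ((d / 2 ^ n) ^ (1 + q * α) * I) ^ (1/q)
      * ((d / 2 ^ n) * (d / 2 ^ (n+1))) ^ (-(1/q)) = M * ρ ^ n := by
    intro n
    have he2 : (0:ℝ) < d / 2 ^ n := hℓpos n
    set e2 : ℝ := d / 2 ^ n with he2def
    have hsplit : d / 2 ^ (n+1) = e2 / 2 := by
      rw [he2def, div_div, ← pow_succ]
    rw [hsplit]
    have h1 : (e2 ^ (1 + q * α) * I) ^ (1/q) = e2 ^ ((1 + q * α)/q) * I ^ (1/q) := by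
      rw [Real.mul_rpow (by positivity) hI0, ← Real.rpow_mul he2.le, mul_one_div]
    have h2 : (e2 * (e2 / 2)) ^ (-(1/q)) = e2 ^ (-(1/q)) * e2 ^ (-(1/q)) * 2 ^ (1/q) := by
      have hee : e2 * (e2 / 2) = e2 * e2 / 2 := by ring
      rw [hee, Real.div_rpow (by positivity) (by norm_num),
        Real.mul_rpow he2.le he2.le, Real.rpow_neg (by norm_num : (0:ℝ) ≤ 2), div_eq_mul_inv, inv_inv]
    rw [h1, h2]
    have h3 : e2 ^ ((1 + q * α)/q) * e2 ^ (-(1/q)) * e2 ^ (-(1/q)) = e2 ^ β := by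
      rw [← Real.rpow_add he2, ← Real.rpow_add he2]
      congr 1
      rw [hβ]
      field_simp
      ring
    have h4 : e2 ^ β = d ^ β * ρ ^ n := by
      rw [he2def, Real.div_rpow hd.le (by positivity)]
      have h5 : ((2:ℝ) ^ n) ^ β = ((2:ℝ) ^ β) ^ n := by
        rw [← Real.rpow_natCast 2 n, ← Real.rpow_natCast ((2:ℝ) ^ β) n,
          ← Real.rpow_mul (by norm_num), ← Real.rpow_mul (by norm_num), mul_comm]
      rw [h5, div_eq_mul_inv, ← inv_pow, ← hρ]
    calc e2 ^ ((1 + q * α)/q) * I ^ (1/q) * (e2 ^ (-(1/q)) * e2 ^ (-(1/q)) * 2 ^ (1/q))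
        = (e2 ^ ((1 + q * α)/q) * e2 ^ (-(1/q)) * e2 ^ (-(1/q))) * I ^ (1/q) * 2 ^ (1/q) := by
          ring
      _ = e2 ^ β * I ^ (1/q) * 2 ^ (1/q) := by rw [h3]
      _ = (d ^ β * ρ ^ n) * I ^ (1/q) * 2 ^ (1/q) := by rw [h4]
      _ = M * ρ ^ n := by rw [hMdef]; ring
  -- step bounds
  have hstepA : ∀ n : ℕ, |a (n+1) - a n| ≤ M * ρ ^ n := by
    intro n
    have h := grr_avg_diff q α hq hα g hg s t hRdef hR u (d / 2 ^ n) u (d / 2 ^ (n+1))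
      (d / 2 ^ n) (hℓpos n) (hℓpos (n+1)) (hℓpos n) (hsubA n) (hsubA (n+1))
      (fun x hx y hy => by
        have h1 := hℓmono n
        exact abs_le.mpr ⟨by linarith [hx.1, hx.2, hy.1, hy.2], by linarith [hx.1, hx.2, hy.1, hy.2]⟩)
    rw [abs_sub_comm]
    calc |a n - a (n+1)| ≤ ((d / 2 ^ n) ^ (1 + q * α) * R.toReal) ^ (1/q)
        * ((d / 2 ^ n) * (d / 2 ^ (n+1))) ^ (-(1/q)) := h
      _ = M * ρ ^ n := hstep n
  have hstepB : ∀ n : ℕ, |b (n+1) - b n| ≤ M * ρ ^ n := by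
    intro n
    have h := grr_avg_diff q α hq hα g hg s t hRdef hR (v - d / 2 ^ n) (d / 2 ^ n)
      (v - d / 2 ^ (n+1)) (d / 2 ^ (n+1)) (d / 2 ^ n) (hℓpos n) (hℓpos (n+1)) (hℓpos n)
      (hsubB n) (hsubB (n+1))
      (fun x hx y hy => by
        have h1 := hℓmono n
        have hx1 := hx.1
        have hx2 := hx.2
        have hy1 := hy.1
        have hy2 := hy.2
        exact abs_le.mpr ⟨by linarith, by linarith⟩)
    rw [abs_sub_comm]
    calc |b n - b (n+1)| ≤ ((d / 2 ^ n) ^ (1 + q * α) * R.toReal) ^ (1/q)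
        * ((d / 2 ^ n) * (d / 2 ^ (n+1))) ^ (-(1/q)) := h
      _ = M * ρ ^ n := hstep n
  -- geometric sums
  have hgeom : ∀ N : ℕ, (∑ n ∈ Finset.range N, (M * ρ ^ n)) ≤ M * (1 - ρ)⁻¹ := by
    intro N
    rw [← Finset.mul_sum]
    apply mul_le_mul_of_nonneg_left ?_ hM0
    have h1ρ : (0:ℝ) < 1 - ρ := by linarith
    rw [geom_sum_eq hρ1.ne N]
    have : (ρ ^ N - 1) / (ρ - 1) = (1 - ρ ^ N) / (1 - ρ) := by
      rw [← neg_div_neg_eq]; ring_nf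
    rw [this]
    rw [div_le_iff₀ h1ρ, inv_mul_cancel₀ h1ρ.ne']
    have : (0:ℝ) ≤ ρ ^ N := pow_nonneg hρ0.le N
    linarith
  have hpartial : ∀ (f : ℕ → ℝ), (∀ n, |f (n+1) - f n| ≤ M * ρ ^ n) →
      ∀ N, |f N - f 0| ≤ M * (1 - ρ)⁻¹ := by
    intro f hf N
    calc |f N - f 0| = |∑ i ∈ Finset.range N, (f (i+1) - f i)| := by
          rw [Finset.sum_range_sub]
      _ ≤ ∑ i ∈ Finset.range N, |f (i+1) - f i| := Finset.abs_sum_le_sum_abs _ _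
      _ ≤ ∑ i ∈ Finset.range N, M * ρ ^ i := Finset.sum_le_sum (fun i _ => hf i)
      _ ≤ M * (1 - ρ)⁻¹ := hgeom N
  -- limits
  have hta : Tendsto a atTop (nhds (g u)) := by
    have := grr_tendsto_avg g hg u d hd (fun _ => u)
      (fun n => ⟨le_refl u, by linarith [hℓpos n]⟩)
    exact this
  have htb : Tendsto b atTop (nhds (g v)) := by
    have := grr_tendsto_avg g hg v d hd (fun n => v - d / 2 ^ n)
      (fun n => ⟨by linarith [hℓpos n], by linarith⟩)
    exact this
  have hA : |g u - a 0| ≤ M * (1 - ρ)⁻¹ :=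
    le_of_tendsto ((hta.sub_const (a 0)).abs)
      (Eventually.of_forall (hpartial a hstepA))
  have hB : |g v - b 0| ≤ M * (1 - ρ)⁻¹ :=
    le_of_tendsto ((htb.sub_const (b 0)).abs)
      (Eventually.of_forall (hpartial b hstepB))
  have h00 : a 0 = b 0 := by
    have h1 : v - d / 2 ^ 0 = u := by rw [hd']; ring
    rw [ha, hb]
    simp only [h1]
  have htotal : |g u - g v| ≤ 2 * (M * (1 - ρ)⁻¹) := by
    have htri : |g u - g v| ≤ |g u - a 0| + |a 0 - g v| := abs_sub_le _ _ _
    have h2 : |a 0 - g v| = |g v - b 0| := by rw [h00, abs_sub_comm]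
    linarith
  -- final
  have hdβ : (0:ℝ) < d ^ β := Real.rpow_pos_of_pos hd β
  have h1ρ : (0:ℝ) < 1 - ρ := by linarith
  have hXY : |g u - g v| / d ^ β ≤ 2 * 2 ^ (1/q) * (1 - ρ)⁻¹ * I ^ (1/q) := by
    rw [div_le_iff₀ hdβ]
    calc |g u - g v| ≤ 2 * (M * (1 - ρ)⁻¹) := htotal
      _ = 2 * 2 ^ (1/q) * (1 - ρ)⁻¹ * I ^ (1/q) * d ^ β := by rw [hMdef]; ring
  have hfinal : (|g u - g v| / d ^ β) ^ q ≤ (2 * 2 ^ (1/q) / (1 - ρ)) ^ q * I := by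
    have hXnn : (0:ℝ) ≤ |g u - g v| / d ^ β := by positivity
    have h2 : (0:ℝ) < 2 ^ (1/q) := Real.rpow_pos_of_pos two_pos _
    calc (|g u - g v| / d ^ β) ^ q ≤ (2 * 2 ^ (1/q) * (1 - ρ)⁻¹ * I ^ (1/q)) ^ q :=
          Real.rpow_le_rpow hXnn hXY hq0.le
      _ = (2 * 2 ^ (1/q) / (1 - ρ)) ^ q * (I ^ (1/q)) ^ q := by
          rw [← Real.mul_rpow (by positivity) (Real.rpow_nonneg hI0 _)]
          norm_num [div_eq_mul_inv, mul_assoc]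
      _ = (2 * 2 ^ (1/q) / (1 - ρ)) ^ q * I := by
          rw [← Real.rpow_mul hI0, one_div, inv_mul_cancel₀ hq0.ne', Real.rpow_one]
  calc ENNReal.ofReal ((|g u - g v| / d ^ β) ^ q)
      ≤ ENNReal.ofReal ((2 * 2 ^ (1/q) / (1 - ρ)) ^ q * I) := ENNReal.ofReal_le_ofReal hfinal
    _ = ENNReal.ofReal ((2 * 2 ^ (1/q) / (1 - ρ)) ^ q) * ENNReal.ofReal I :=
        ENNReal.ofReal_mul hc0.le
    _ = _ := by rw [hIdef, ENNReal.ofReal_toReal hR]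


/-- **Garsia–Rodemich–Rumsey inequality:** for `q > 1`, `α ∈ (1/q, 1)` and `f` continuous on
`[0,∞)`, the `(α - 1/q)`-Hölder seminorm of `f` on `[s,t]` satisfies
`(sup_{u ≠ v} |f(u)-f(v)|/|u-v|^{α-1/q})^q ≤ c_{α,q} ∫_s^t ∫_s^t |f(u)-f(v)|^q / |u-v|^{1+qα} du dv`
(stated pointwise in `u ≠ v`; the right-hand side may be infinite). -/
theorem stmt11 (q α : ℝ) (hq : 1 < q) (hα : α ∈ Set.Ioo (1 / q) 1) :
    ∃ c : ℝ, 0 < c ∧ ∀ f : ℝ → ℝ, ContinuousOn f (Set.Ici (0 : ℝ)) →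
      ∀ s t : ℝ, 0 ≤ s → s < t →
        ∀ u ∈ Set.Icc s t, ∀ v ∈ Set.Icc s t, u ≠ v →
          ENNReal.ofReal ((|f u - f v| / |u - v| ^ (α - 1 / q)) ^ q)
            ≤ ENNReal.ofReal c *
              ∫⁻ x in Set.Icc s t, ∫⁻ y in Set.Icc s t,
                ENNReal.ofReal (|f x - f y| ^ q / |x - y| ^ (1 + q * α)) := by
  have hq0 : (0:ℝ) < q := one_pos.trans hq
  refine ⟨(2 * 2 ^ (1 / q) / (1 - ((2:ℝ) ^ (α - 1 / q))⁻¹)) ^ q, ?_, ?_⟩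
  · have hβ0 : 0 < α - 1/q := sub_pos.2 hα.1
    have h2β : 1 < (2:ℝ) ^ (α - 1/q) :=
      (Real.one_lt_rpow_iff_of_pos two_pos).mpr (Or.inl ⟨one_lt_two, hβ0⟩)
    have h1ρ : 0 < 1 - ((2:ℝ) ^ (α - 1/q))⁻¹ := by
      have := inv_lt_one_of_one_lt₀ h2β; linarith
    have h2 : (0:ℝ) < 2 ^ (1/q) := Real.rpow_pos_of_pos two_pos _
    positivity
  · intro f hf s t hs hst u hu v hv huv
    set g : ℝ → ℝ := fun x => f (max x 0) with hgdef
    have hgc : Continuous g := hf.comp_continuous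
      (continuous_id.max continuous_const) (fun x => le_max_right x 0)
    have hfg : ∀ x ∈ Icc s t, f x = g x := fun x hx => by
      show f x = f (max x 0)
      rw [max_eq_left (hs.trans hx.1)]
    have hint : (∫⁻ x in Icc s t, ∫⁻ y in Icc s t,
          ENNReal.ofReal (|f x - f y| ^ q / |x - y| ^ (1 + q * α)))
        = ∫⁻ x in Icc s t, ∫⁻ y in Icc s t,
          ENNReal.ofReal (|g x - g y| ^ q / |x - y| ^ (1 + q * α)) := by
      apply setLIntegral_congr_fun measurableSet_Icc
      intro x hx
      apply setLIntegral_congr_fun measurableSet_Icc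
      exact fun y hy => by rw [hfg x hx, hfg y hy]
    rw [hint, show |f u - f v| = |g u - g v| by rw [hfg u hu, hfg v hv]]
    rcases lt_or_gt_of_ne huv with h | h
    · have hk := grr_key q α hq hα g hgc s t u v hu hv h
      rwa [show |u - v| = v - u by rw [abs_sub_comm, abs_of_pos (sub_pos.2 h)]]
    · have hk := grr_key q α hq hα g hgc s t v u hv hu h
      rwa [show |u - v| = u - v from abs_of_pos (sub_pos.2 h),
        abs_sub_comm (g u) (g v)]
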